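/- Let H be a complex Hilbert space, 𝔄 a C*-algebra acting on H, σ : 𝔄 → B(H) a linear map, and d : 𝔄 → B(H) a continuous σ-derivation. Then every A in the separating space 𝔖(σ) annihilates the range of d: A·d(B) = 0 and d(B)·A = 0 for all B ∈ 𝔄. -/

import Mathlib

open Filter Topology

/-- **Lemma 3.1.** Let `𝔄` be a C*-algebra acting on a Hilbert space `H` (a norm-closed
star-subalgebra of `B(H)`), `σ : 𝔄 → B(H)` a linear map and `d : 𝔄 → B(H)` a
continuous `σ`-derivation. Then every `A ∈ 𝔖(σ)` annihilates the range of `d`. -/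
theorem stmt_6 {H : Type*} [NormedAddCommGroup H] [InnerProductSpace ℂ H]
    [CompleteSpace H]
    (𝔄 : NonUnitalStarSubalgebra ℂ (H →L[ℂ] H))
    (hcl : IsClosed (𝔄 : Set (H →L[ℂ] H)))
    (σ d : 𝔄 →ₗ[ℂ] (H →L[ℂ] H))
    (hd_cont : Continuous d)
    (hd : ∀ A B : 𝔄, d (A * B) = d A * σ B + σ A * d B)
    (A : H →L[ℂ] H)
    (hA : ∃ y : ℕ → 𝔄, Tendsto y atTop (𝓝 0) ∧
      Tendsto (fun n => σ (y n)) atTop (𝓝 A))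
    (B : 𝔄) :
    A * d B = 0 ∧ d B * A = 0 := by
  obtain ⟨y, hy0, hyA⟩ := hA
  have hdy : Tendsto (fun n => d (y n)) atTop (𝓝 0) := by
    simpa [map_zero, Function.comp_def] using (hd_cont.tendsto 0).comp hy0
  constructor
  · have h1 : Tendsto (fun n => d (y n * B)) atTop (𝓝 0) := by
      have hyB : Tendsto (fun n => y n * B) atTop (𝓝 0) := by
        simpa using hy0.mul (tendsto_const_nhds (x := B))
      simpa [map_zero, Function.comp_def] using (hd_cont.tendsto 0).comp hyB
    have h2 : Tendsto (fun n => σ (y n) * d B) atTop (𝓝 (A * d B)) :=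
      hyA.mul tendsto_const_nhds
    have h3 : Tendsto (fun n => σ (y n) * d B) atTop (𝓝 0) := by
      have := h1.sub (hdy.mul (tendsto_const_nhds (x := σ B)))
      simpa [hd, add_sub_cancel_left] using this
    exact tendsto_nhds_unique h2 h3
  · have h1 : Tendsto (fun n => d (B * y n)) atTop (𝓝 0) := by
      have hBy : Tendsto (fun n => B * y n) atTop (𝓝 0) := by
        simpa using (tendsto_const_nhds (x := B)).mul hy0
      simpa [map_zero, Function.comp_def] using (hd_cont.tendsto 0).comp hBy
    have h2 : Tendsto (fun n => d B * σ (y n)) atTop (𝓝 (d B * A)) :=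
      tendsto_const_nhds.mul hyA
    have h3 : Tendsto (fun n => d B * σ (y n)) atTop (𝓝 0) := by
      have := h1.sub ((tendsto_const_nhds (x := σ B)).mul hdy)
      simpa [hd, add_sub_cancel_right] using this
    exact tendsto_nhds_unique h2 h3
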